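/- For every nonempty finite set S of integers there exists f ∈ S such that the number of distinct values among {ν₂(f − g) : g ∈ S, g ≠ f} is at most log₂ |S|. -/

import Mathlib

open scoped BigOperators

lemma aux_split (S A : Finset ℤ) (hAS : A ⊆ S) (hA : A.Nonempty)
    (hodd : ∀ g ∈ S, g ∉ A → ∀ f ∈ A, ¬ ((2:ℤ) ∣ (f - g)))
    (hsmall : 2 * A.card ≤ S.card)
    (hrec : ∃ f ∈ A, 2 ^ ((A.erase f).image (fun g => padicValInt 2 (f - g))).card ≤ A.card) :
    ∃ f ∈ S, 2 ^ ((S.erase f).image (fun g => padicValInt 2 (f - g))).card ≤ S.card := by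
  obtain ⟨f, hf, hc⟩ := hrec
  refine ⟨f, hAS hf, ?_⟩
  have hsub : (S.erase f).image (fun g => padicValInt 2 (f - g)) ⊆
      ((A.erase f).image (fun g => padicValInt 2 (f - g))) ∪ {0} := by
    intro v hv
    obtain ⟨g, hg, rfl⟩ := Finset.mem_image.mp hv
    have hgS : g ∈ S := Finset.mem_of_mem_erase hg
    have hgf : g ≠ f := Finset.ne_of_mem_erase hg
    by_cases hgA : g ∈ A
    · exact Finset.mem_union_left _ (Finset.mem_image_of_mem _
        (Finset.mem_erase.mpr ⟨hgf, hgA⟩))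
    · have : padicValInt 2 (f - g) = 0 := by
        apply padicValInt.eq_zero_of_not_dvd
        exact_mod_cast hodd g hgS hgA f hf
      rw [this]
      exact Finset.mem_union_right _ (Finset.mem_singleton_self 0)
  have hcard : ((S.erase f).image (fun g => padicValInt 2 (f - g))).card ≤
      ((A.erase f).image (fun g => padicValInt 2 (f - g))).card + 1 := by
    calc _ ≤ (((A.erase f).image (fun g => padicValInt 2 (f - g))) ∪ ({0} : Finset ℕ)).card :=
          Finset.card_le_card hsub
      _ ≤ _ := by simpa using Finset.card_union_le _ ({0} : Finset ℕ)
  calc (2:ℕ) ^ ((S.erase f).image (fun g => padicValInt 2 (f - g))).card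
      ≤ 2 ^ (((A.erase f).image (fun g => padicValInt 2 (f - g))).card + 1) :=
        Nat.pow_le_pow_right (by norm_num) hcard
    _ = 2 * 2 ^ ((A.erase f).image (fun g => padicValInt 2 (f - g))).card := by ring
    _ ≤ 2 * A.card := by omega
    _ ≤ S.card := hsmall


lemma aux_same (n : ℕ)
    (ih : ∀ m < n, ∀ (S : Finset ℤ) (hS : S.Nonempty),
      S.card + (S.max' hS - S.min' hS).toNat ≤ m →
      ∃ f ∈ S, 2 ^ ((S.erase f).image (fun g => padicValInt 2 (f - g))).card ≤ S.card)
    (S : Finset ℤ) (hS : S.Nonempty)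
    (hn : S.card + (S.max' hS - S.min' hS).toNat ≤ n)
    (hcard : 1 < S.card)
    (hall : ∀ x ∈ S, ∀ y ∈ S, (2:ℤ) ∣ x - y) :
    ∃ f ∈ S, 2 ^ ((S.erase f).image (fun g => padicValInt 2 (f - g))).card ≤ S.card := by
  set a := S.min' hS with ha
  have haS : a ∈ S := S.min'_mem hS
  set φ : ℤ → ℤ := fun x => (x - a) / 2 with hφ
  have hdvd : ∀ x ∈ S, (2:ℤ) ∣ x - a := fun x hx => hall x hx a haS
  have hexact : ∀ x ∈ S, 2 * φ x = x - a := by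
    intro x hx
    exact Int.mul_ediv_cancel' (hdvd x hx)
  have hinj : Set.InjOn φ S := by
    intro x hx y hy h
    have e1 := hexact x hx
    have e2 := hexact y hy
    rw [h] at e1
    omega
  set T := S.image φ with hT
  have hTne : T.Nonempty := hS.image φ
  have hTcard : T.card = S.card := Finset.card_image_of_injOn hinj
  obtain ⟨x, hx, hxm⟩ := Finset.mem_image.mp (T.max'_mem hTne)
  obtain ⟨y, hy, hym⟩ := Finset.mem_image.mp (T.min'_mem hTne)
  have hd : S.min' hS < S.max' hS := Finset.min'_lt_max'_of_card S hcard
  have hmeas : T.card + (T.max' hTne - T.min' hTne).toNat < n := by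
    have e1 := hexact x hx
    have e2 := hexact y hy
    have hx1 : x ≤ S.max' hS := S.le_max' x hx
    have hy1 : S.min' hS ≤ y := S.min'_le y hy
    rw [← hxm, ← hym]
    have hTc := hTcard
    omega
  obtain ⟨f', hf'T, hbound⟩ := ih _ hmeas T hTne le_rfl
  obtain ⟨f, hf, hff⟩ := Finset.mem_image.mp hf'T
  refine ⟨f, hf, ?_⟩
  have hsub : (S.erase f).image (fun g => padicValInt 2 (f - g)) ⊆
      ((T.erase f').image (fun g => padicValInt 2 (f' - g))).image (fun k => k + 1) := by
    intro val hval
    obtain ⟨g, hg, rfl⟩ := Finset.mem_image.mp hval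
    have hgS : g ∈ S := Finset.mem_of_mem_erase hg
    have hgf : g ≠ f := Finset.ne_of_mem_erase hg
    have hg'T : φ g ∈ T := Finset.mem_image_of_mem φ hgS
    have hg'f' : φ g ≠ f' := by
      intro h
      rw [← hff] at h
      exact hgf (hinj hgS hf h)
    have ef := hexact f hf
    have eg := hexact g hgS
    have hne : f' - φ g ≠ 0 := by
      rw [← hff]
      intro h
      exact hg'f' (by omega)
    have hfg : f - g = (f' - φ g) * 2 := by rw [← hff]; omega
    rw [Finset.mem_image]
    refine ⟨padicValInt 2 (f' - φ g), Finset.mem_image_of_mem _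
      (Finset.mem_erase.mpr ⟨hg'f', hg'T⟩), ?_⟩
    rw [hfg]
    have := padicValInt_mul_eq_succ (p := 2) (f' - φ g) hne
    simpa using this.symm
  calc (2:ℕ) ^ ((S.erase f).image (fun g => padicValInt 2 (f - g))).card
      ≤ 2 ^ ((T.erase f').image (fun g => padicValInt 2 (f' - g))).card := by
        apply Nat.pow_le_pow_right (by norm_num)
        exact le_trans (Finset.card_le_card hsub) (Finset.card_image_le)
    _ ≤ T.card := hbound
    _ = S.card := hTcard

lemma key : ∀ n : ℕ, ∀ S : Finset ℤ, ∀ hS : S.Nonempty,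
    S.card + (S.max' hS - S.min' hS).toNat ≤ n →
    ∃ f ∈ S, 2 ^ ((S.erase f).image (fun g => padicValInt 2 (f - g))).card ≤ S.card := by
  intro n
  induction n using Nat.strong_induction_on with
  | _ n ih =>
    intro S hS hn
    by_cases hcard : S.card ≤ 1
    · -- singleton
      obtain ⟨a, ha⟩ := hS
      have : S = {a} := by
        apply Finset.eq_singleton_iff_unique_mem.mpr
        exact ⟨ha, fun x hx => Finset.card_le_one.mp hcard x hx a ha⟩
      subst this
      exact ⟨a, by simp⟩
    · push_neg at hcard
      set E := S.filter (fun x => Even x) with hE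
      set O := S.filter (fun x => ¬ Even x) with hO
      have hEO : E.card + O.card = S.card := Finset.card_filter_add_card_filter_not _
      -- subset facts
      have hES : E ⊆ S := Finset.filter_subset _ _
      have hOS : O ⊆ S := Finset.filter_subset _ _
      by_cases hEne : E.Nonempty
      · by_cases hOne : O.Nonempty
        · -- both parts nonempty: recurse on the smaller
          have recurse : ∀ A : Finset ℤ, A ⊆ S → A.Nonempty → A.card < S.card →
              ∃ f ∈ A, 2 ^ ((A.erase f).image (fun g => padicValInt 2 (f - g))).card ≤ A.card := by
            intro A hAS hAne hAc
            apply ih (A.card + (A.max' hAne - A.min' hAne).toNat) _ A hAne le_rfl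
            have h1 : A.max' hAne ≤ S.max' hS := Finset.max'_subset hAne hAS
            have h2 : S.min' hS ≤ A.min' hAne := Finset.min'_subset hAne hAS
            have : (A.max' hAne - A.min' hAne).toNat ≤ (S.max' hS - S.min' hS).toNat :=
              Int.toNat_le_toNat (by omega)
            omega
          have hEc : E.card < S.card := by
            obtain ⟨o, ho⟩ := hOne
            apply Finset.card_lt_card
            refine ⟨hES, fun h => ?_⟩
            have := h (hOS ho)
            rw [hE, Finset.mem_filter] at this
            rw [hO, Finset.mem_filter] at ho
            exact ho.2 this.2
          have hOc : O.card < S.card := by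
            obtain ⟨e, he⟩ := hEne
            apply Finset.card_lt_card
            refine ⟨hOS, fun h => ?_⟩
            have := h (hES he)
            rw [hO, Finset.mem_filter] at this
            rw [hE, Finset.mem_filter] at he
            exact this.2 he.2
          rcases le_total E.card O.card with hle | hle
          · apply aux_split S E hES hEne _ (by omega) (recurse E hES hEne hEc)
            intro g hg hgE f hf
            have hfe : Even f := (Finset.mem_filter.mp hf).2
            have hgo : ¬ Even g := by
              intro h
              exact hgE (Finset.mem_filter.mpr ⟨hg, h⟩)
            rintro ⟨k, hk⟩
            have hev : Even (f - g) := ⟨k, by omega⟩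
            rw [Int.even_sub] at hev
            exact hgo (hev.mp hfe)
          · apply aux_split S O hOS hOne _ (by omega) (recurse O hOS hOne hOc)
            intro g hg hgO f hf
            have hfo : ¬ Even f := (Finset.mem_filter.mp hf).2
            have hge : Even g := by
              by_contra h
              exact hgO (Finset.mem_filter.mpr ⟨hg, h⟩)
            rintro ⟨k, hk⟩
            have hev : Even (f - g) := ⟨k, by omega⟩
            rw [Int.even_sub] at hev
            exact hfo (hev.mpr hge)
        · -- O empty: all even, same parity
          apply aux_same n ih S hS hn hcard
          intro x hx y hy
          have hx' : Even x := by
            by_contra h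
            exact hOne ⟨x, Finset.mem_filter.mpr ⟨hx, h⟩⟩
          have hy' : Even y := by
            by_contra h
            exact hOne ⟨y, Finset.mem_filter.mpr ⟨hy, h⟩⟩
          have hev : Even (x - y) := Int.even_sub.mpr (by tauto)
          obtain ⟨k, hk⟩ := hev
          exact ⟨k, by omega⟩
      · -- E empty: all odd, same parity
        apply aux_same n ih S hS hn hcard
        intro x hx y hy
        have hx' : ¬ Even x := fun h => hEne ⟨x, Finset.mem_filter.mpr ⟨hx, h⟩⟩
        have hy' : ¬ Even y := fun h => hEne ⟨y, Finset.mem_filter.mpr ⟨hy, h⟩⟩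
        have hev : Even (x - y) := Int.even_sub.mpr (by tauto)
        obtain ⟨k, hk⟩ := hev
        exact ⟨k, by omega⟩

theorem stmt4 (S : Finset ℤ) (hS : S.Nonempty) :
    ∃ f ∈ S,
      ((((S.erase f).image (fun g => padicValInt 2 (f - g))).card : ℝ))
        ≤ Real.logb 2 (S.card : ℝ) := by
  obtain ⟨f, hf, h2⟩ := key (S.card + (S.max' hS - S.min' hS).toNat) S hS le_rfl
  refine ⟨f, hf, ?_⟩
  set c := ((S.erase f).image (fun g => padicValInt 2 (f - g))).card
  have h2' : (2:ℝ) ^ c ≤ (S.card : ℝ) := by exact_mod_cast h2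
  have hpos : (0:ℝ) < (2:ℝ) ^ c := by positivity
  have := Real.logb_le_logb_of_le (b := 2) (by norm_num) hpos h2'
  rw [Real.logb_pow] at this
  simpa [Real.logb_self_eq_one] using this
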